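/- In the RSG of Example 2 (14052 agents, 2001 resources: one resource x with quota 53, 1000 identical resources of quota 8, 1000 identical resources of quota 7, all of type 1, with beta values β_x > β_y > β_z > f_x(q_x − 2)), every Nash equilibrium allocation a that is stable for the grand coalition N must have x ∈ L(a), i.e., resource x is assigned exactly q_x − 1 = 52 agents. -/

import Mathlib

variable {N M : Type*}

/-- Number of agents assigned to resource `i` at allocation `a`. -/
def load [Fintype N] [DecidableEq M] (a : N → M) (i : M) : ℕ :=
  (Finset.univ.filter (fun j => a j = i)).card

/-- The cost incurred by agent `j` at allocation `a` for cost profile `f`. -/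
def cost [Fintype N] [DecidableEq M] (f : M → ℕ → ℕ) (a : N → M) (j : N) : ℕ :=
  f (a j) (load a (a j))

/-- The maximum cost over resources at allocation `a`. -/
def maxcost [Fintype N] [Fintype M] [DecidableEq M] (f : M → ℕ → ℕ) (a : N → M) : ℕ :=
  Finset.univ.sup (fun i => f i (load a i))

/-- The minmaxcost `α` of the RSG: minimum over allocations of the maxcost. -/
noncomputable def minmax (N : Type*) [Fintype N] [Fintype M] [DecidableEq M] (f : M → ℕ → ℕ) : ℕ :=
  sInf (Set.range (maxcost (N := N) f))

/-- The quota of resource `i`: the largest `t` with `f i t ≤ α`. -/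
noncomputable def quota (f : M → ℕ → ℕ) (α : ℕ) (i : M) : ℕ :=
  sSup {t | f i t ≤ α}

/-- `a` is a Nash equilibrium: no single agent can strictly decrease its cost
by switching to another resource. -/
def Nash [Fintype N] [DecidableEq M] (f : M → ℕ → ℕ) (a : N → M) : Prop :=
  ∀ j : N, ∀ i : M, i ≠ a j → cost f a j ≤ f i (load a i + 1)

/-- `a` is `c`-stable: coalition `c` has no deviation making every member weakly
better off and some member strictly better off. -/
def cStable [Fintype N] [DecidableEq N] [DecidableEq M]
    (f : M → ℕ → ℕ) (a : N → M) (c : Finset N) : Prop :=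
  ¬ ∃ b : N → M, (∀ j ∉ c, b j = a j) ∧
      (∀ j ∈ c, cost f b j ≤ cost f a j) ∧ (∃ j ∈ c, cost f b j < cost f a j)

/-- In the RSG of Example 2 (14052 agents; resource `0` is `x` with quota 53, resources
`1,…,1000` are the identical `y` resources with quota 8, resources `1001,…,2000` are the
identical `z` resources with quota 7; all of type 1; `β_x > β_y > β_z > f_x(q_x − 2)`),
every Nash equilibrium allocation that is stable for the grand coalition assigns exactly
`q_x − 1 = 52` agents to resource `x`. -/
lemma sum_piecewise (c0 cy cz : ℕ) :
    ∑ i : Fin 2001, (if (i : ℕ) = 0 then c0 else if (i : ℕ) ≤ 1000 then cy else cz)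
      = c0 + 1000 * cy + 1000 * cz := by
  rw [Fin.sum_univ_eq_sum_range (fun n => if n = 0 then c0 else if n ≤ 1000 then cy else cz) 2001]
  rw [Finset.range_eq_Ico,
    ← Finset.sum_Ico_consecutive _ (by norm_num : (0:ℕ) ≤ 1001) (by norm_num : (1001:ℕ) ≤ 2001),
    ← Finset.sum_Ico_consecutive _ (by norm_num : (0:ℕ) ≤ 1) (by norm_num : (1:ℕ) ≤ 1001)]
  have h1 : ∑ i ∈ Finset.Ico 0 1, (if i = 0 then c0 else if i ≤ 1000 then cy else cz) = c0 := by
    simp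
  have h2 : ∑ i ∈ Finset.Ico 1 1001, (if i = 0 then c0 else if i ≤ 1000 then cy else cz)
      = 1000 * cy := by
    have h : ∀ i ∈ Finset.Ico 1 1001, (if i = 0 then c0 else if i ≤ 1000 then cy else cz) = cy := by
      intro i hi
      rw [Finset.mem_Ico] at hi
      rw [if_neg (by omega), if_pos (by omega)]
    rw [Finset.sum_congr rfl h, Finset.sum_const, Nat.card_Ico, smul_eq_mul]
  have h3 : ∑ i ∈ Finset.Ico 1001 2001, (if i = 0 then c0 else if i ≤ 1000 then cy else cz)
      = 1000 * cz := by
    have h : ∀ i ∈ Finset.Ico 1001 2001, (if i = 0 then c0 else if i ≤ 1000 then cy else cz) = cz := by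
      intro i hi
      rw [Finset.mem_Ico] at hi
      rw [if_neg (by omega), if_neg (by omega)]
    rw [Finset.sum_congr rfl h, Finset.sum_const, Nat.card_Ico, smul_eq_mul]
  rw [h1, h2, h3]

theorem example2_x_is_low
    (f : Fin 2001 → ℕ → ℕ) (hmono : ∀ i, StrictMono (f i)) (hzero : ∀ i, f i 0 = 0)
    (hyy : ∀ i i' : Fin 2001, 1 ≤ i.val → i.val ≤ 1000 → 1 ≤ i'.val → i'.val ≤ 1000 →
      f i = f i')
    (hzz : ∀ i i' : Fin 2001, 1001 ≤ i.val → 1001 ≤ i'.val → f i = f i')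
    (q : Fin 2001 → ℕ) (hq : ∀ i, q i = quota f (minmax (Fin 14052) f) i)
    (hqx : q 0 = 53)
    (hqy : ∀ i : Fin 2001, 1 ≤ i.val → i.val ≤ 1000 → q i = 8)
    (hqz : ∀ i : Fin 2001, 1001 ≤ i.val → q i = 7)
    (htype1 : ∀ i, f i (q i) = minmax (Fin 14052) f)
    (hbeta : ∀ i j : Fin 2001, 1 ≤ i.val → i.val ≤ 1000 → 1001 ≤ j.val →
      f i 7 < f 0 52 ∧ f j 6 < f i 7 ∧ f 0 51 < f j 6) :
    ∀ a : Fin 14052 → Fin 2001, Nash f a → cStable f a Finset.univ →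
      load a 0 = 52 := by
  intro a hNash hStable
  classical
  set α := minmax (Fin 14052) f with hαdef
  have hsum : ∑ i : Fin 2001, load a i = 14052 := by
    have h : (Finset.univ : Finset (Fin 14052)).card = ∑ i : Fin 2001, load a i :=
      Finset.card_eq_sum_card_fiberwise (fun j _ => Finset.mem_univ (a j))
    rw [← h, Finset.card_univ, Fintype.card_fin]
  have hval0 : ∀ i : Fin 2001, (i : ℕ) = 0 → i = 0 := by
    intro i h
    exact Fin.ext (by simpa using h)
  have hqval : ∀ i : Fin 2001, q i = if (i : ℕ) = 0 then 53 else if (i : ℕ) ≤ 1000 then 8 else 7 := by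
    intro i
    by_cases h0 : (i : ℕ) = 0
    · rw [if_pos h0, hval0 i h0, hqx]
    · rw [if_neg h0]
      by_cases h1 : (i : ℕ) ≤ 1000
      · rw [if_pos h1, hqy i (by omega) h1]
      · rw [if_neg h1, hqz i (by omega)]
  have hsumq : ∑ i : Fin 2001, q i = 15053 := by
    rw [Finset.sum_congr rfl (fun i _ => hqval i), sum_piecewise]
  have hq7 : ∀ i : Fin 2001, 7 ≤ q i := by
    intro i; rw [hqval i]; split_ifs <;> omega
  have hfq1 : ∀ i : Fin 2001, α < f i (q i + 1) := by
    intro i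
    by_contra hcon
    push_neg at hcon
    have hbdd : BddAbove {t | f i t ≤ α} := ⟨α, fun t ht => le_trans (hmono i).le_apply ht⟩
    have h2 : q i + 1 ≤ sSup {t | f i t ≤ α} := le_csSup hbdd hcon
    have h3 : q i = sSup {t | f i t ≤ α} := hq i
    rw [← h3] at h2
    omega
  -- upper bound on loads
  have hub : ∀ i, load a i ≤ q i := by
    by_contra hcon
    push_neg at hcon
    obtain ⟨i, hi⟩ := hcon
    have hex : ∃ i', load a i' < q i' := by
      by_contra h'
      push_neg at h'
      have h1 : ∑ i : Fin 2001, q i ≤ ∑ i : Fin 2001, load a i :=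
        Finset.sum_le_sum fun i _ => h' i
      rw [hsum, hsumq] at h1
      omega
    obtain ⟨i', hi'⟩ := hex
    have hne : i' ≠ i := fun h => by rw [h] at hi'; omega
    obtain ⟨j, hj⟩ : ∃ j, a j = i := by
      have hpos : 0 < load a i := by have := hq7 i; omega
      rw [load, Finset.card_pos] at hpos
      obtain ⟨j, hj⟩ := hpos
      exact ⟨j, (Finset.mem_filter.mp hj).2⟩
    have hN : f (a j) (load a (a j)) ≤ f i' (load a i' + 1) := hNash j i' (by rw [hj]; exact hne)
    rw [hj] at hN
    have h1 : f i (q i + 1) ≤ f i (load a i) := (hmono i).monotone (by omega)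
    have h2 : f i' (load a i' + 1) ≤ f i' (q i') := (hmono i').monotone (by omega)
    rw [htype1 i'] at h2
    have h3 := hfq1 i
    omega
  -- lower bound on loads
  have hlb : ∀ i, q i ≤ load a i + 1 := by
    by_contra hcon
    push_neg at hcon
    obtain ⟨i, hi⟩ := hcon
    have hex : ∃ i', q i' ≤ load a i' := by
      by_contra h'
      push_neg at h'
      have h1 : ∑ i : Fin 2001, load a i ≤ ∑ i : Fin 2001, (q i - 1) :=
        Finset.sum_le_sum fun i _ => by have := h' i; omega
      have h2 : ∑ i : Fin 2001, (q i - 1) = 13052 := by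
        have h3 : ∀ i : Fin 2001, q i - 1
            = if (i : ℕ) = 0 then 52 else if (i : ℕ) ≤ 1000 then 7 else 6 := by
          intro i; rw [hqval i]; split_ifs <;> omega
        rw [Finset.sum_congr rfl (fun i _ => h3 i), sum_piecewise]
      rw [hsum, h2] at h1
      omega
    obtain ⟨i', hi'⟩ := hex
    have hload' : load a i' = q i' := le_antisymm (hub i') hi'
    have hne : i ≠ i' := by
      intro h
      rw [h] at hi
      omega
    obtain ⟨j, hj⟩ : ∃ j, a j = i' := by
      have hpos : 0 < load a i' := by have := hq7 i'; omega
      rw [load, Finset.card_pos] at hpos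
      obtain ⟨j, hj⟩ := hpos
      exact ⟨j, (Finset.mem_filter.mp hj).2⟩
    have hN : f (a j) (load a (a j)) ≤ f i (load a i + 1) := hNash j i (by rw [hj]; exact hne)
    rw [hj, hload', htype1 i'] at hN
    have h2 : f i (load a i + 1) < f i (q i) := hmono i (by omega)
    rw [htype1 i] at h2
    omega
  -- conclusion setup
  have h52 : 52 ≤ load a 0 := by have := hlb 0; rw [hqx] at this; omega
  have h53 : load a 0 ≤ 53 := by have := hub 0; rw [hqx] at this; omega
  by_cases hx : load a 0 = 53
  swap
  · omega
  exfalso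
  -- existence of a low y resource
  obtain ⟨Y1, hY1a, hY1b, hY1l⟩ : ∃ i : Fin 2001, 1 ≤ (i : ℕ) ∧ (i : ℕ) ≤ 1000 ∧ load a i = 7 := by
    by_contra h'
    push_neg at h'
    have hbound : ∀ i : Fin 2001,
        (if (i : ℕ) = 0 then 53 else if (i : ℕ) ≤ 1000 then 8 else 6) ≤ load a i := by
      intro i
      by_cases h0 : (i : ℕ) = 0
      · rw [if_pos h0, hval0 i h0, hx]
      · rw [if_neg h0]
        by_cases h1 : (i : ℕ) ≤ 1000
        · rw [if_pos h1]
          have hne7 := h' i (by omega) h1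
          have hu := hub i
          have hl := hlb i
          rw [hqy i (by omega) h1] at hu hl
          omega
        · rw [if_neg h1]
          have hl := hlb i
          rw [hqz i (by omega)] at hl
          omega
    have h1 : ∑ i : Fin 2001, (if (i : ℕ) = 0 then 53 else if (i : ℕ) ≤ 1000 then 8 else 6)
        ≤ ∑ i : Fin 2001, load a i := Finset.sum_le_sum fun i _ => hbound i
    rw [hsum, sum_piecewise] at h1
    omega
  -- existence of a low z resource
  obtain ⟨Z1, hZ1a, hZ1l⟩ : ∃ i : Fin 2001, 1001 ≤ (i : ℕ) ∧ load a i = 6 := by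
    by_contra h'
    push_neg at h'
    have hbound : ∀ i : Fin 2001,
        (if (i : ℕ) = 0 then 53 else if (i : ℕ) ≤ 1000 then 7 else 7) ≤ load a i := by
      intro i
      by_cases h0 : (i : ℕ) = 0
      · rw [if_pos h0, hval0 i h0, hx]
      · rw [if_neg h0]
        by_cases h1 : (i : ℕ) ≤ 1000
        · rw [if_pos h1]
          have hl := hlb i
          rw [hqy i (by omega) h1] at hl
          omega
        · rw [if_neg h1]
          have hne6 := h' i (by omega)
          have hu := hub i
          have hl := hlb i
          rw [hqz i (by omega)] at hu hl
          omega
    have h1 : ∑ i : Fin 2001, (if (i : ℕ) = 0 then 53 else if (i : ℕ) ≤ 1000 then 7 else 7)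
        ≤ ∑ i : Fin 2001, load a i := Finset.sum_le_sum fun i _ => hbound i
    rw [hsum, sum_piecewise] at h1
    omega
  have hY10 : Y1 ≠ 0 := by
    intro h
    rw [h] at hY1a
    simp at hY1a
  have hZ10 : Z1 ≠ 0 := by
    intro h
    rw [h] at hZ1a
    simp at hZ1a
  have hYZ : Y1 ≠ Z1 := by
    intro h
    rw [h] at hY1b
    omega
  obtain ⟨hb1, hb2, hb3⟩ := hbeta Y1 Z1 hY1a hY1b hZ1a
  have hαx : f 0 53 = α := by have h := htype1 0; rwa [hqx] at h
  have hαY : f Y1 8 = α := by have h := htype1 Y1; rwa [hqy Y1 hY1a hY1b] at h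
  have hαZ : f Z1 7 = α := by have h := htype1 Z1; rwa [hqz Z1 hZ1a] at h
  -- choose the agents to move off x
  set X : Finset (Fin 14052) := Finset.univ.filter (fun j => a j = 0) with hXdef
  have hXcard : X.card = 53 := hx
  obtain ⟨S7, hS7sub, hS7card⟩ := Finset.exists_subset_card_eq (s := X) (n := 7) (by omega)
  obtain ⟨S8, hS8sub, hS8card⟩ := Finset.exists_subset_card_eq (s := X \ S7) (n := 8)
    (by rw [Finset.card_sdiff_of_subset hS7sub, hXcard, hS7card]; omega)
  have hS7a : ∀ j ∈ S7, a j = 0 := fun j hj => (Finset.mem_filter.mp (hS7sub hj)).2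
  have hS8a : ∀ j ∈ S8, a j = 0 :=
    fun j hj => (Finset.mem_filter.mp (Finset.sdiff_subset (hS8sub hj))).2
  have hS78 : ∀ j ∈ S8, j ∉ S7 := fun j hj => (Finset.mem_sdiff.mp (hS8sub hj)).2
  set b : Fin 14052 → Fin 2001 := fun j =>
    if j ∈ S7 then Z1 else if j ∈ S8 then Y1
    else if a j = 0 ∨ a j = Y1 ∨ a j = Z1 then 0 else a j with hbdef
  have hbeval : ∀ j, (j ∈ S7 ∧ b j = Z1) ∨ (j ∉ S7 ∧ j ∈ S8 ∧ b j = Y1)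
      ∨ (j ∉ S7 ∧ j ∉ S8 ∧ (a j = 0 ∨ a j = Y1 ∨ a j = Z1) ∧ b j = 0)
      ∨ (j ∉ S7 ∧ j ∉ S8 ∧ ¬(a j = 0 ∨ a j = Y1 ∨ a j = Z1) ∧ b j = a j) := by
    intro j
    by_cases h7 : j ∈ S7
    · exact Or.inl ⟨h7, by rw [hbdef]; simp [h7]⟩
    · by_cases h8 : j ∈ S8
      · exact Or.inr (Or.inl ⟨h7, h8, by rw [hbdef]; simp [h7, h8]⟩)
      · by_cases ho : a j = 0 ∨ a j = Y1 ∨ a j = Z1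
        · exact Or.inr (Or.inr (Or.inl ⟨h7, h8, ho, by rw [hbdef]; simp [h7, h8, ho]⟩))
        · exact Or.inr (Or.inr (Or.inr ⟨h7, h8, ho, by rw [hbdef]; simp [h7, h8, ho]⟩))
  -- load of b at Z1
  have hfibZ : Finset.univ.filter (fun j => b j = Z1) = S7 := by
    ext j
    simp only [Finset.mem_filter, Finset.mem_univ, true_and]
    constructor
    · intro hbj
      rcases hbeval j with ⟨h7, _⟩ | ⟨h7, h8, hc⟩ | ⟨h7, h8, ho, hc⟩ | ⟨h7, h8, ho, hc⟩
      · exact h7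
      · rw [hc] at hbj; exact absurd hbj hYZ
      · rw [hc] at hbj; exact absurd hbj.symm hZ10
      · rw [hc] at hbj; exact absurd (Or.inr (Or.inr hbj)) ho
    · intro h7
      rcases hbeval j with ⟨_, hc⟩ | ⟨h7', _, _⟩ | ⟨h7', _, _, _⟩ | ⟨h7', _, _, _⟩
      · exact hc
      · exact absurd h7 h7'
      · exact absurd h7 h7'
      · exact absurd h7 h7'
  have hlbZ : load b Z1 = 7 := by
    have h : load b Z1 = (Finset.univ.filter (fun j => b j = Z1)).card := rfl
    rw [h, hfibZ, hS7card]
  -- load of b at Y1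
  have hfibY : Finset.univ.filter (fun j => b j = Y1) = S8 := by
    ext j
    simp only [Finset.mem_filter, Finset.mem_univ, true_and]
    constructor
    · intro hbj
      rcases hbeval j with ⟨h7, hc⟩ | ⟨h7, h8, hc⟩ | ⟨h7, h8, ho, hc⟩ | ⟨h7, h8, ho, hc⟩
      · rw [hc] at hbj; exact absurd hbj.symm hYZ
      · exact h8
      · rw [hc] at hbj; exact absurd hbj.symm hY10
      · rw [hc] at hbj; exact absurd (Or.inr (Or.inl hbj)) ho
    · intro h8
      rcases hbeval j with ⟨h7, _⟩ | ⟨_, _, hc⟩ | ⟨_, h8', _, _⟩ | ⟨_, h8', _, _⟩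
      · exact absurd (hS78 j h8) (by simpa using h7)
      · exact hc
      · exact absurd h8 h8'
      · exact absurd h8 h8'
  have hlbY : load b Y1 = 8 := by
    have h : load b Y1 = (Finset.univ.filter (fun j => b j = Y1)).card := rfl
    rw [h, hfibY, hS8card]
  -- load of b at 0
  have hfY : (Finset.univ.filter (fun j => a j = Y1)).card = 7 := hY1l
  have hfZ : (Finset.univ.filter (fun j => a j = Z1)).card = 6 := hZ1l
  have hload0 : load b 0 ≤ 51 := by
    have hsub : Finset.univ.filter (fun j => b j = 0) ⊆
        ((X ∪ Finset.univ.filter (fun j => a j = Y1))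
          ∪ Finset.univ.filter (fun j => a j = Z1)) \ (S7 ∪ S8) := by
      intro j hj
      rw [Finset.mem_filter] at hj
      obtain ⟨-, hbj⟩ := hj
      rcases hbeval j with ⟨h7, hc⟩ | ⟨h7, h8, hc⟩ | ⟨h7, h8, ho, hc⟩ | ⟨h7, h8, ho, hc⟩
      · rw [hc] at hbj; exact absurd hbj hZ10
      · rw [hc] at hbj; exact absurd hbj hY10
      · rw [Finset.mem_sdiff]
        constructor
        · rcases ho with h | h | h
          · exact Finset.mem_union_left _ (Finset.mem_union_left _
              (by rw [hXdef, Finset.mem_filter]; exact ⟨Finset.mem_univ j, h⟩))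
          · exact Finset.mem_union_left _ (Finset.mem_union_right _
              (by rw [Finset.mem_filter]; exact ⟨Finset.mem_univ j, h⟩))
          · exact Finset.mem_union_right _
              (by rw [Finset.mem_filter]; exact ⟨Finset.mem_univ j, h⟩)
        · rw [Finset.mem_union]
          rintro (h | h)
          · exact h7 h
          · exact h8 h
      · rw [hc] at hbj; exact absurd (Or.inl hbj) ho
    have h1 : load b 0 ≤ (((X ∪ Finset.univ.filter (fun j => a j = Y1))
        ∪ Finset.univ.filter (fun j => a j = Z1)) \ (S7 ∪ S8)).card :=
      Finset.card_le_card hsub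
    have h2 : (S7 ∪ S8) ⊆ ((X ∪ Finset.univ.filter (fun j => a j = Y1))
        ∪ Finset.univ.filter (fun j => a j = Z1)) := by
      intro j hj
      rcases Finset.mem_union.mp hj with h | h
      · exact Finset.mem_union_left _ (Finset.mem_union_left _ (hS7sub h))
      · exact Finset.mem_union_left _ (Finset.mem_union_left _ (Finset.sdiff_subset (hS8sub h)))
    rw [Finset.card_sdiff_of_subset h2] at h1
    have h3 : ((X ∪ Finset.univ.filter (fun j => a j = Y1))
        ∪ Finset.univ.filter (fun j => a j = Z1)).card ≤ 66 := by
      calc ((X ∪ Finset.univ.filter (fun j => a j = Y1))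
          ∪ Finset.univ.filter (fun j => a j = Z1)).card
          ≤ (X ∪ Finset.univ.filter (fun j => a j = Y1)).card
            + (Finset.univ.filter (fun j => a j = Z1)).card := Finset.card_union_le _ _
        _ ≤ X.card + (Finset.univ.filter (fun j => a j = Y1)).card
            + (Finset.univ.filter (fun j => a j = Z1)).card := by
            have := Finset.card_union_le X (Finset.univ.filter (fun j => a j = Y1))
            omega
        _ ≤ 66 := by rw [hXcard, hfY, hfZ]
    have h4 : (S7 ∪ S8).card = 15 := by
      rw [Finset.card_union_of_disjoint
        (Finset.disjoint_left.mpr fun j hj7 hj8 => hS78 j hj8 hj7), hS7card, hS8card]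
    omega
  -- loads elsewhere are unchanged
  have hlbo : ∀ i : Fin 2001, i ≠ 0 → i ≠ Y1 → i ≠ Z1 → load b i = load a i := by
    intro i h0 hY hZ
    have hfib : Finset.univ.filter (fun j => b j = i) = Finset.univ.filter (fun j => a j = i) := by
      ext j
      simp only [Finset.mem_filter, Finset.mem_univ, true_and]
      constructor
      · intro hbj
        rcases hbeval j with ⟨h7, hc⟩ | ⟨h7, h8, hc⟩ | ⟨h7, h8, ho, hc⟩ | ⟨h7, h8, ho, hc⟩
        · rw [hc] at hbj; exact absurd hbj.symm hZ
        · rw [hc] at hbj; exact absurd hbj.symm hY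
        · rw [hc] at hbj; exact absurd hbj.symm h0
        · rw [← hc]; exact hbj
      · intro haj
        rcases hbeval j with ⟨h7, hc⟩ | ⟨h7, h8, hc⟩ | ⟨h7, h8, ho, hc⟩ | ⟨h7, h8, ho, hc⟩
        · rw [hS7a j h7] at haj; exact absurd haj.symm h0
        · rw [hS8a j h8] at haj; exact absurd haj.symm h0
        · rcases ho with h | h | h
          · rw [h] at haj; exact absurd haj.symm h0
          · rw [h] at haj; exact absurd haj.symm hY
          · rw [h] at haj; exact absurd haj.symm hZ
        · rw [hc, haj]
    have h : load b i = (Finset.univ.filter (fun j => b j = i)).card := rfl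
    rw [h, hfib]
    rfl
  -- all agents weakly better off
  have hcosts : ∀ j, cost f b j ≤ cost f a j := by
    intro j
    have hc : cost f b j = f (b j) (load b (b j)) := rfl
    have hca : cost f a j = f (a j) (load a (a j)) := rfl
    rcases hbeval j with ⟨h7, hbj⟩ | ⟨h7, h8, hbj⟩ | ⟨h7, h8, ho, hbj⟩ | ⟨h7, h8, ho, hbj⟩
    · rw [hc, hca, hbj, hS7a j h7, hlbZ, hx, hαZ, hαx]
    · rw [hc, hca, hbj, hS8a j h8, hlbY, hx, hαY, hαx]
    · rw [hc, hbj]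
      have h1 : f 0 (load b 0) ≤ f 0 51 := (hmono 0).monotone hload0
      rcases ho with h | h | h
      · rw [hca, h, hx, hαx]
        have h2 : f 0 51 ≤ f 0 53 := (hmono 0).monotone (by omega)
        omega
      · rw [hca, h, hY1l]
        omega
      · rw [hca, h, hZ1l]
        omega
    · rw [hc, hca, hbj]
      push_neg at ho
      rw [hlbo (a j) ho.1 ho.2.1 ho.2.2]
  -- one agent strictly better off
  obtain ⟨j0, hj0⟩ : ∃ j, a j = Z1 := by
    have hpos : 0 < load a Z1 := by omega
    rw [load, Finset.card_pos] at hpos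
    obtain ⟨j, hj⟩ := hpos
    exact ⟨j, (Finset.mem_filter.mp hj).2⟩
  have hbj0 : b j0 = 0 := by
    rcases hbeval j0 with ⟨h7, hc⟩ | ⟨h7, h8, hc⟩ | ⟨h7, h8, ho, hc⟩ | ⟨h7, h8, ho, hc⟩
    · rw [hS7a j0 h7] at hj0; exact absurd hj0.symm hZ10
    · rw [hS8a j0 h8] at hj0; exact absurd hj0.symm hZ10
    · exact hc
    · exact absurd (Or.inr (Or.inr hj0)) ho
  have hstrict : cost f b j0 < cost f a j0 := by
    have hc : cost f b j0 = f (b j0) (load b (b j0)) := rfl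
    have hca : cost f a j0 = f (a j0) (load a (a j0)) := rfl
    rw [hc, hca, hbj0, hj0, hZ1l]
    have h1 : f 0 (load b 0) ≤ f 0 51 := (hmono 0).monotone hload0
    omega
  exact hStable ⟨b, fun j hj => absurd (Finset.mem_univ j) hj,
    fun j _ => hcosts j, j0, Finset.mem_univ j0, hstrict⟩
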